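/- Let G be a group, A a group acting on G via automorphisms, k ≥ 2, and H = [G,A]. If A fixes every element of order dividing p (dividing 4 if p = 2) in γ_k(G,A), then Ω(γ_{k-1}(H)) ≤ Ω(γ_k(G,A)) ≤ Z(H), i.e., every element of order dividing p (4 if p=2) in γ_{k-1}(H) lies in γ_k(G,A), and every such element of γ_k(G,A) is centralized by H. -/

import Mathlib

open SemidirectProduct
open scoped commutatorElement

/-- Left-normed commutator `[x, l₁, l₂, …]`. -/
def lnc {S : Type*} [Group S] (x : S) (l : List S) : S :=
  l.foldl (fun c y => ⁅c, y⁆) x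

/-- `γ_k(G,A)`: the subgroup of the semidirect product `G ⋊[φ] A` generated by all
left-normed commutators `[x₁,…,xₙ]` with `n ≥ k`, `x₁ ∈ G`, each `xᵢ ∈ G ∪ A`,
and at least `k-1` of the `xᵢ` in `A`. -/
def gammaGA {G A : Type*} [Group G] [Group A] (φ : A →* MulAut G) (k : ℕ) :
    Subgroup (G ⋊[φ] A) :=
  Subgroup.closure {x | ∃ (g : G) (l : List (G ⋊[φ] A)),
      k ≤ l.length + 1 ∧
      (∀ y ∈ l, (∃ h : G, y = inl h) ∨ (∃ a : A, y = inr a)) ∧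
      (∃ s : Finset (Fin l.length), k - 1 ≤ s.card ∧
        ∀ i ∈ s, ∃ a : A, l.get i = inr a) ∧
      x = lnc (inl g) l}

section Aux

variable {G A : Type*} [Group G] [Group A] (φ : A →* MulAut G)

/-- The generating set of `gammaGA φ k`. -/
def gaSet (k : ℕ) : Set (G ⋊[φ] A) :=
  {x | ∃ (g : G) (l : List (G ⋊[φ] A)),
      k ≤ l.length + 1 ∧
      (∀ y ∈ l, (∃ h : G, y = inl h) ∨ (∃ a : A, y = inr a)) ∧
      (∃ s : Finset (Fin l.length), k - 1 ≤ s.card ∧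
        ∀ i ∈ s, ∃ a : A, l.get i = inr a) ∧
      x = lnc (inl g) l}

lemma gammaGA_eq (k : ℕ) : gammaGA φ k = Subgroup.closure (gaSet φ k) := rfl

lemma lnc_append {S : Type*} [Group S] (x : S) (l : List S) (z : S) :
    lnc x (l ++ [z]) = ⁅lnc x l, z⁆ := by
  simp [lnc]

variable {φ}

lemma mem_gaSet_concat {k : ℕ} {w : G ⋊[φ] A} (hw : w ∈ gaSet φ k) {z : G ⋊[φ] A}
    (hz : (∃ h : G, z = inl h) ∨ (∃ a : A, z = inr a)) : ⁅w, z⁆ ∈ gaSet φ k := by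
  obtain ⟨g, l, hlen, hmem, ⟨s, hcard, hs⟩, rfl⟩ := hw
  have elen : (l ++ [z]).length = l.length + 1 := by simp
  refine ⟨g, l ++ [z], by omega, ?_, ?_, (lnc_append _ l z).symm⟩
  · intro y hy
    rcases List.mem_append.mp hy with h | h
    · exact hmem y h
    · rw [List.mem_singleton] at h; subst h; exact hz
  · let e : Fin l.length ↪ Fin (l ++ [z]).length :=
      ⟨fun i => ⟨i.1, by rw [elen]; exact Nat.lt_succ_of_lt i.isLt⟩,
       fun i j h => by simpa [Fin.ext_iff] using h⟩
    refine ⟨s.map e, by rw [Finset.card_map]; exact hcard, ?_⟩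
    intro i hi
    obtain ⟨j, hj, rfl⟩ := Finset.mem_map.mp hi
    obtain ⟨a, ha⟩ := hs j hj
    refine ⟨a, ?_⟩
    show (l ++ [z]).get ⟨j.1, _⟩ = inr a
    rw [List.get_eq_getElem, List.getElem_append_left j.isLt]
    rw [List.get_eq_getElem] at ha
    exact ha

lemma mem_gaSet_concat_inr {k : ℕ} {w : G ⋊[φ] A} (hw : w ∈ gaSet φ k) (a : A) :
    ⁅w, (inr a : G ⋊[φ] A)⁆ ∈ gaSet φ (k + 1) := by
  obtain ⟨g, l, hlen, hmem, ⟨s, hcard, hs⟩, rfl⟩ := hw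
  set z : G ⋊[φ] A := inr a with hzdef
  have elen : (l ++ [z]).length = l.length + 1 := by simp
  refine ⟨g, l ++ [z], by omega, ?_, ?_, (lnc_append _ l z).symm⟩
  · intro y hy
    rcases List.mem_append.mp hy with h | h
    · exact hmem y h
    · rw [List.mem_singleton] at h; subst h; exact Or.inr ⟨a, rfl⟩
  · let e : Fin l.length ↪ Fin (l ++ [z]).length :=
      ⟨fun i => ⟨i.1, by rw [elen]; exact Nat.lt_succ_of_lt i.isLt⟩,
       fun i j h => by simpa [Fin.ext_iff] using h⟩
    have hlast : l.length < (l ++ [z]).length := by omega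
    have hnotmem : (⟨l.length, hlast⟩ : Fin (l ++ [z]).length) ∉ s.map e := by
      intro hmem'
      obtain ⟨j, _, hj⟩ := Finset.mem_map.mp hmem'
      have : j.1 = l.length := congrArg Fin.val hj
      omega
    refine ⟨insert ⟨l.length, hlast⟩ (s.map e), ?_, ?_⟩
    · rw [Finset.card_insert_of_notMem hnotmem, Finset.card_map]; omega
    · intro i hi
      rcases Finset.mem_insert.mp hi with h | h
      · subst h
        refine ⟨a, ?_⟩
        rw [List.get_eq_getElem]
        exact List.getElem_concat_length rfl _
      · obtain ⟨j, hj, rfl⟩ := Finset.mem_map.mp h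
        obtain ⟨b, hb⟩ := hs j hj
        refine ⟨b, ?_⟩
        show (l ++ [z]).get ⟨j.1, _⟩ = inr b
        rw [List.get_eq_getElem, List.getElem_append_left j.isLt]
        rw [List.get_eq_getElem] at hb
        exact hb

lemma conj_mem_gammaGA {k : ℕ} {z : G ⋊[φ] A}
    (hz : (∃ h : G, z = inl h) ∨ (∃ a : A, z = inr a)) {x : G ⋊[φ] A}
    (hx : x ∈ gammaGA φ k) : z * x * z⁻¹ ∈ gammaGA φ k := by
  induction hx using Subgroup.closure_induction with
  | mem w hw =>
    have he : z * w * z⁻¹ = ⁅w, z⁆⁻¹ * w := by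
      simp only [commutatorElement_def]; group
    rw [he]
    exact mul_mem (inv_mem (Subgroup.subset_closure (mem_gaSet_concat hw hz)))
      (Subgroup.subset_closure hw)
  | one => simpa using Subgroup.one_mem _
  | mul u v hu hv pu pv =>
    have he : z * (u * v) * z⁻¹ = (z * u * z⁻¹) * (z * v * z⁻¹) := by group
    rw [he]; exact mul_mem pu pv
  | inv u hu pu =>
    have he : z * u⁻¹ * z⁻¹ = (z * u * z⁻¹)⁻¹ := by group
    rw [he]; exact inv_mem pu

instance gammaGA_normal (k : ℕ) : (gammaGA φ k).Normal := by
  constructor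
  intro x hx n
  obtain ⟨nl, nr⟩ := n
  have hn : (⟨nl, nr⟩ : G ⋊[φ] A) = inl nl * inr nr := (inl_left_mul_inr_right _).symm
  rw [hn]
  have h1 := conj_mem_gammaGA (k := k) (Or.inr ⟨nr, rfl⟩) hx
  have h2 := conj_mem_gammaGA (k := k) (Or.inl ⟨nl, rfl⟩) h1
  have e : (inl nl : G ⋊[φ] A) * (inr nr * x * (inr nr)⁻¹) * (inl nl)⁻¹ =
      (inl nl * inr nr) * x * (inl nl * inr nr)⁻¹ := by group
  rwa [e] at h2

lemma comm_mem_of_forall_gen {P : Type*} [Group P] {S : Set P} {N : Subgroup P}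
    (hN : N.Normal) {z : P} (hS : ∀ w ∈ S, ⁅w, z⁆ ∈ N) :
    ∀ u ∈ Subgroup.closure S, ⁅u, z⁆ ∈ N := by
  intro u hu
  induction hu using Subgroup.closure_induction with
  | mem w hw => exact hS w hw
  | one =>
    have h1 : ⁅(1 : P), z⁆ = 1 := by simp only [commutatorElement_def]; group
    rw [h1]; exact N.one_mem
  | mul u v hu hv pu pv =>
    have h1 : ⁅u * v, z⁆ = u * ⁅v, z⁆ * u⁻¹ * ⁅u, z⁆ := by
      simp only [commutatorElement_def]; group
    rw [h1]
    exact N.mul_mem (hN.conj_mem _ pv u) pu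
  | inv u hu pu =>
    have h1 : ⁅u⁻¹, z⁆ = u⁻¹ * ⁅u, z⁆⁻¹ * u⁻¹⁻¹ := by
      simp only [commutatorElement_def]; group
    rw [h1]
    exact hN.conj_mem _ (N.inv_mem pu) u⁻¹

lemma comm_inl_mem {m : ℕ} : ∀ u ∈ gammaGA φ m, ∀ g : G,
    ⁅u, (inl g : G ⋊[φ] A)⁆ ∈ gammaGA φ m := by
  intro u hu g
  exact comm_mem_of_forall_gen (gammaGA_normal m)
    (fun w hw => Subgroup.subset_closure (mem_gaSet_concat hw (Or.inl ⟨g, rfl⟩))) u hu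

lemma comm_inr_mem {m : ℕ} : ∀ u ∈ gammaGA φ m, ∀ a : A,
    ⁅u, (inr a : G ⋊[φ] A)⁆ ∈ gammaGA φ (m + 1) := by
  intro u hu a
  exact comm_mem_of_forall_gen (gammaGA_normal (m + 1))
    (fun w hw => Subgroup.subset_closure (mem_gaSet_concat_inr hw a)) u hu

lemma comm_sub_inl (m : ℕ) :
    ⁅gammaGA φ m, (⊤ : Subgroup G).map (inl : G →* G ⋊[φ] A)⁆ ≤ gammaGA φ m := by
  rw [Subgroup.commutator_le]
  rintro u hu _ ⟨g, -, rfl⟩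
  exact comm_inl_mem u hu g

lemma comm_sub_inr (m : ℕ) :
    ⁅gammaGA φ m, (⊤ : Subgroup A).map (inr : A →* G ⋊[φ] A)⁆ ≤ gammaGA φ (m + 1) := by
  rw [Subgroup.commutator_le]
  rintro u hu _ ⟨a, -, rfl⟩
  exact comm_inr_mem u hu a

lemma three_subgroups {P : Type*} [Group P] {H₁ H₂ H₃ N : Subgroup P} (hN : N.Normal)
    (h1 : ⁅⁅H₂, H₃⁆, H₁⁆ ≤ N) (h2 : ⁅⁅H₃, H₁⁆, H₂⁆ ≤ N) : ⁅⁅H₁, H₂⁆, H₃⁆ ≤ N := by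
  haveI := hN
  have key : ∀ K : Subgroup P, K ≤ N ↔ Subgroup.map (QuotientGroup.mk' N) K = ⊥ := by
    intro K
    rw [Subgroup.map_eq_bot_iff, QuotientGroup.ker_mk']
  rw [key] at h1 h2 ⊢
  rw [Subgroup.map_commutator, Subgroup.map_commutator] at h1 h2 ⊢
  exact Subgroup.commutator_commutator_eq_bot_of_rotate h1 h2

lemma comm_H_le (m : ℕ) :
    ⁅gammaGA φ m, ⁅(⊤ : Subgroup G).map (inl : G →* G ⋊[φ] A),
      (⊤ : Subgroup A).map (inr : A →* G ⋊[φ] A)⁆⁆ ≤ gammaGA φ (m + 1) := by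
  rw [Subgroup.commutator_comm]
  apply three_subgroups (gammaGA_normal (m + 1))
  · calc ⁅⁅(⊤ : Subgroup A).map (inr : A →* G ⋊[φ] A), gammaGA φ m⁆,
        (⊤ : Subgroup G).map (inl : G →* G ⋊[φ] A)⁆
        ≤ ⁅gammaGA φ (m + 1), (⊤ : Subgroup G).map (inl : G →* G ⋊[φ] A)⁆ := by
          apply Subgroup.commutator_mono _ le_rfl
          rw [Subgroup.commutator_comm]
          exact comm_sub_inr m
      _ ≤ gammaGA φ (m + 1) := comm_sub_inl (m + 1)
  · calc ⁅⁅gammaGA φ m, (⊤ : Subgroup G).map (inl : G →* G ⋊[φ] A)⁆,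
        (⊤ : Subgroup A).map (inr : A →* G ⋊[φ] A)⁆
        ≤ ⁅gammaGA φ m, (⊤ : Subgroup A).map (inr : A →* G ⋊[φ] A)⁆ :=
          Subgroup.commutator_mono (comm_sub_inl m) le_rfl
      _ ≤ gammaGA φ (m + 1) := comm_sub_inr m

lemma H_le_gamma2 :
    ⁅(⊤ : Subgroup G).map (inl : G →* G ⋊[φ] A),
      (⊤ : Subgroup A).map (inr : A →* G ⋊[φ] A)⁆ ≤ gammaGA φ 2 := by
  rw [Subgroup.commutator_le]
  rintro _ ⟨g, -, rfl⟩ _ ⟨a, -, rfl⟩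
  apply Subgroup.subset_closure
  refine ⟨g, [inr a], by simp, ?_, ?_, ?_⟩
  · intro y hy
    rw [List.mem_singleton] at hy
    subst hy
    exact Or.inr ⟨a, rfl⟩
  · refine ⟨Finset.univ, by simp, ?_⟩
    intro i _
    exact ⟨a, by fin_cases i; rfl⟩
  · simp [lnc]

lemma lcs_le_gamma {H : Subgroup (G ⋊[φ] A)}
    (hH : H = ⁅(⊤ : Subgroup G).map (inl : G →* G ⋊[φ] A),
               (⊤ : Subgroup A).map (inr : A →* G ⋊[φ] A)⁆) (n : ℕ) :
    lowerCentralSeries H n ≤ gammaGA φ (n + 2) := by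
  induction n with
  | zero =>
    change H ≤ _
    rw [hH]
    exact H_le_gamma2
  | succ n ih =>
    change ⁅lowerCentralSeries H n, H⁆ ≤ _
    calc ⁅lowerCentralSeries H n, H⁆
        ≤ ⁅gammaGA φ (n + 2), H⁆ := Subgroup.commutator_mono ih le_rfl
      _ ≤ gammaGA φ (n + 3) := by rw [hH]; exact comm_H_le (n + 2)

end Aux

theorem stmt3 {G A : Type*} [Group G] [Group A] (φ : A →* MulAut G)
    (p : ℕ) [Fact p.Prime] (k : ℕ) (hk : 2 ≤ k)
    (H : Subgroup (G ⋊[φ] A))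
    (hH : H = ⁅(⊤ : Subgroup G).map (inl : G →* G ⋊[φ] A),
               (⊤ : Subgroup A).map (inr : A →* G ⋊[φ] A)⁆)
    (hfix : ∀ x ∈ gammaGA φ k, x ^ (if p = 2 then 4 else p) = 1 →
      ∀ a : A, (inr a : G ⋊[φ] A) * x * (inr a : G ⋊[φ] A)⁻¹ = x) :
    (∀ x ∈ lowerCentralSeries H (k - 2), ((x : G ⋊[φ] A)) ^ (if p = 2 then 4 else p) = 1 →
        (x : G ⋊[φ] A) ∈ gammaGA φ k) ∧
    (∀ x ∈ gammaGA φ k, x ^ (if p = 2 then 4 else p) = 1 →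
        ∀ y ∈ H, x * y = y * x) := by
  constructor
  · intro x hx _
    have hmem : (↑x : G ⋊[φ] A) ∈ lowerCentralSeries H (k - 2) := hx
    have h2 := lcs_le_gamma hH (k - 2) hmem
    rwa [Nat.sub_add_cancel hk] at h2
  · intro x hxΓ hxq y hy
    suffices hc : H ≤ Subgroup.centralizer {x} by
      have hy' := hc hy
      rw [Subgroup.mem_centralizer_iff] at hy'
      exact hy' x (Set.mem_singleton x)
    rw [hH, Subgroup.commutator_le]
    rintro _ ⟨g, -, rfl⟩ _ ⟨a, -, rfl⟩
    rw [Subgroup.mem_centralizer_iff]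
    intro w hw
    rw [Set.mem_singleton_iff] at hw
    rw [hw]
    -- goal : x * ⁅inl g, inr a⁆ = ⁅inl g, inr a⁆ * x
    set g' : G ⋊[φ] A := inl g with hg'
    set a' : G ⋊[φ] A := inr a with ha'
    -- the conjugate y₀ = g'⁻¹ * x * g' lies in Ω(gammaGA φ k)
    have hyΓ : g'⁻¹ * x * g'⁻¹⁻¹ ∈ gammaGA φ k :=
      conj_mem_gammaGA (Or.inl ⟨g⁻¹, by rw [hg', map_inv]⟩) hxΓ
    rw [inv_inv] at hyΓ
    have hyq : (g'⁻¹ * x * g') ^ (if p = 2 then 4 else p) = 1 := by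
      have hrw : g'⁻¹ * x * g' = g'⁻¹ * x * g'⁻¹⁻¹ := by rw [inv_inv]
      rw [hrw, conj_pow, hxq, mul_one]
      group
    have e2 : a' * (g'⁻¹ * x * g') * a'⁻¹ = g'⁻¹ * x * g' :=
      hfix (g'⁻¹ * x * g') hyΓ hyq a
    have e1' : a'⁻¹ * x * a' = x := by
      have := hfix x hxΓ hxq a⁻¹
      rwa [map_inv, inv_inv, ← ha'] at this
    have e1 : x * a'⁻¹ = a'⁻¹ * x := by
      conv_lhs => rw [← e1']
      group
    calc x * ⁅g', a'⁆
        = g' * (a' * (g'⁻¹ * x * g') * a'⁻¹) * (a' * g'⁻¹ * a'⁻¹) := by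
          rw [e2, commutatorElement_def]; group
      _ = g' * a' * g'⁻¹ * (x * a'⁻¹) := by group
      _ = g' * a' * g'⁻¹ * (a'⁻¹ * x) := by rw [e1]
      _ = ⁅g', a'⁆ * x := by rw [commutatorElement_def]; group
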